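/- Let A be a row-finite max-plus matrix with finite coefficient g and affine dynamics x'_i = x_{g i} + A(i, g i). The inverse image of a DBM D' (the set {x ∈ ℝ^n : A_g ⊗ x ∈ set(D')}) equals the set of the DBM D defined by D(k,l) = max over pairs (i,j) with g i = k and g j = l of (D'(i,j) + A(j, g j) - A(i, g i)), taking D(k,l) = -∞ when no such pair exists, and additionally D(k,k) ≥ 0 replaced by D(k,k) = max(previous value, 0) on the diagonal; equivalently D = (A_g^c ⊗ D' ⊗ A_g) ⊕ I_n. -/

import Mathlib

open scoped BigOperators

/-- Max-plus matrix product over `EReal = ℝ ∪ {±∞}` (we use only `ℝ ∪ {-∞}`). -/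
noncomputable def mmul {n : ℕ} (A B : Fin n → Fin n → EReal) : Fin n → Fin n → EReal :=
  fun i j => ⨆ k, A i k + B k j

/-- Region matrix `A_g`: keeps the entry `A i (g i)` in each row `i`. -/
noncomputable def region {n : ℕ} (A : Fin n → Fin n → EReal) (g : Fin n → Fin n) :
    Fin n → Fin n → EReal :=
  fun i j => if j = g i then A i j else ⊥

/-- Conjugate matrix: `B^c(i,j) = -B(j,i)` when finite, `-∞` otherwise. -/
noncomputable def mconj {n : ℕ} (B : Fin n → Fin n → EReal) : Fin n → Fin n → EReal :=
  fun i j => if B j i = ⊥ then ⊥ else -B j i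

/-- Max-plus identity matrix. -/
noncomputable def Imat {n : ℕ} : Fin n → Fin n → EReal :=
  fun i j => if i = j then 0 else ⊥

/-- The set of points of `ℝ^n` described by a DBM `D` (constraints `x i - x j ≥ D i j`,
`-∞` bounds being vacuous). -/
def dbmSet {n : ℕ} (D : Fin n → Fin n → EReal) : Set (Fin n → ℝ) :=
  {x | ∀ i j, D i j ≤ ((x i - x j : ℝ) : EReal)}

lemma key (r s t : ℝ) (y : EReal) :
    (-(r:EReal) + y) + (s:EReal) ≤ (t:EReal) ↔ y ≤ ((t + r - s : ℝ) : EReal) := by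
  induction y with
  | bot => simp
  | top =>
      have h1 : -(r:EReal) + ⊤ = ⊤ := by
        rw [EReal.add_top_iff_ne_bot]; simp
      rw [h1]
      have h2 : (⊤ : EReal) + (s:EReal) = ⊤ := by
        rw [EReal.top_add_iff_ne_bot]; simp
      rw [h2]
      simp only [top_le_iff]
      constructor <;> intro hh
      · exact absurd hh (EReal.coe_ne_top t)
      · exact absurd hh (EReal.coe_ne_top _)
  | coe y =>
      norm_cast
      constructor <;> intro <;> linarith

lemma key2 (r t : ℝ) (y : EReal) :
    -(r:EReal) + y ≤ (t:EReal) ↔ y ≤ ((t + r : ℝ) : EReal) := by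
  have := key r 0 t y
  simpa using this

/-- the inverse image of a DBM `D'` under the affine dynamics
`x'_i = x_{g i} + A(i, g i)` is the DBM `(A_g^c ⊗ D' ⊗ A_g) ⊕ I_n`. -/
theorem inverse_image_dbm {n : ℕ} (A : Fin n → Fin n → EReal)
    (hrow : ∀ i, ∃ j, A i j ≠ ⊥) (htop : ∀ i j, A i j ≠ ⊤)
    (g : Fin n → Fin n) (hg : ∀ i, A i (g i) ≠ ⊥)
    (D' : Fin n → Fin n → EReal) :
    {x : Fin n → ℝ | ∀ i j,
        D' i j ≤ ((x (g i) : EReal) + A i (g i)) - ((x (g j) : EReal) + A j (g j))} =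
      dbmSet (fun k l =>
        max (mmul (mmul (mconj (region A g)) D') (region A g) k l) (Imat k l)) := by
  set a : Fin n → ℝ := fun i => (A i (g i)).toReal with ha_def
  have ha : ∀ i, ((a i : ℝ) : EReal) = A i (g i) := fun i =>
    EReal.coe_toReal (htop i (g i)) (hg i)
  ext x
  have hx : ∀ i j, (((x (g i) : ℝ) : EReal) + A i (g i)) - ((x (g j) : EReal) + A j (g j))
      = ((x (g i) + a i - (x (g j) + a j) : ℝ) : EReal) := by
    intro i j
    rw [← ha i, ← ha j]
    norm_cast
  simp only [Set.mem_setOf_eq, dbmSet]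
  constructor
  · intro h k l
    apply max_le
    · apply iSup_le
      intro j
      by_cases hj : l = g j
      · subst hj
        simp only [region, if_pos rfl, if_true, ← ha j]
        rw [← EReal.le_sub_iff_add_le (Or.inl (EReal.coe_ne_bot (a j)))
          (Or.inl (EReal.coe_ne_top (a j)))]
        rw [show ((x k - x (g j) : ℝ) : EReal) - (a j : EReal)
            = ((x k - x (g j) - a j : ℝ) : EReal) by norm_cast]
        apply iSup_le
        intro i
        by_cases hi : k = g i
        · subst hi
          have hm : mconj (region A g) (g i) i = -(a i : EReal) := by
            rw [mconj, region]; simp [hg i, ha i]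
          rw [hm]
          have h' := h i j
          rw [hx i j] at h'
          refine (key2 (a i) _ (D' i j)).mpr ?_
          convert h' using 2
          ring
        · simp [mconj, region, hi]
      · simp [mmul, region, hj]
    · by_cases hkl : k = l
      · subst hkl
        simp only [Imat, if_pos rfl, if_true]
        rw [sub_self]
        exact_mod_cast le_refl (0 : ℝ)
      · simp [Imat, hkl]
  · intro h i j
    have hmax := h (g i) (g j)
    have h1 : (-(a i : EReal) + D' i j) + (a j : EReal) ≤ ((x (g i) - x (g j) : ℝ) : EReal) := by
      refine le_trans ?_ (le_trans (le_max_left _ _) hmax)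
      rw [mmul]
      refine le_iSup_of_le j ?_
      have hreg : region A g j (g j) = ((a j : ℝ) : EReal) := by
        rw [region]; simp [ha j]
      rw [hreg]
      apply add_le_add_left
      rw [mmul]
      refine le_iSup_of_le i ?_
      have : mconj (region A g) (g i) i = -(a i : EReal) := by
        rw [mconj, region]
        simp [hg i, ha i]
      rw [this]
    rw [hx i j]
    have := (key (a i) (a j) (x (g i) - x (g j)) (D' i j)).mp h1
    convert this using 2
    ring
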